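/- For all integers m ≥ 2, the sequence {i(i+1)(d_i(m)² − d_{i-1}(m)d_{i+1}(m))}_{1 ≤ i ≤ m} attains its minimum at i = m, where it equals 2^{-2m} · m(m+1) · C(2m, m)². -/

import Mathlib

open Finset

noncomputable def d (m : ℕ) (i : ℤ) : ℝ :=
  if 0 ≤ i ∧ i ≤ (m : ℤ) then
    ((2 : ℝ) ^ (2 * m))⁻¹ *
      ∑ k ∈ Finset.Icc i.toNat m,
        2 ^ k * (Nat.choose (2 * m - 2 * k) (m - k) : ℝ) *
          (Nat.choose (m + k) k : ℝ) * (Nat.choose k i.toNat : ℝ)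
  else 0

open Nat


/-- scaled Boros-Moll summand coefficients -/
def E (m k : ℕ) : ℕ := 2^k * Nat.choose (2*m-2*k) (m-k) * Nat.choose (m+k) k

/-- binomial transform truncated at N -/
def Tb (c : ℕ → ℕ) (N i : ℕ) : ℕ := ∑ k ∈ Finset.range (N+1), c k * Nat.choose k i

lemma Tb_top (c : ℕ → ℕ) (N : ℕ) : Tb c N N = c N := by
  rw [Tb, Finset.sum_range_succ]
  rw [Finset.sum_eq_zero, Nat.choose_self] <;> simp
  intro k hk
  exact Or.inr (Nat.choose_eq_zero_of_lt hk)

lemma Tb_zero_of_gt (c : ℕ → ℕ) (N i : ℕ) (h : N < i) : Tb c N i = 0 := by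
  rw [Tb, Finset.sum_eq_zero]
  intro k hk
  simp only [Finset.mem_range] at hk
  rw [Nat.choose_eq_zero_of_lt (by omega), Nat.mul_zero]

lemma Tb_single_le (c : ℕ → ℕ) (N i : ℕ) : c N * Nat.choose N i ≤ Tb c N i :=
  Finset.single_le_sum (f := fun k => c k * Nat.choose k i)
    (fun k _ => Nat.zero_le _) (Finset.self_mem_range_succ N)

lemma Tb_succ (c : ℕ → ℕ) (N i : ℕ) :
    Tb c (N+1) (i+1) = Tb (fun k => c (k+1)) N (i+1) + Tb (fun k => c (k+1)) N i := by
  rw [Tb, Finset.sum_range_succ']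
  simp only [Nat.choose_succ_succ', Nat.mul_add, Nat.choose_zero_succ, Nat.mul_zero, Nat.add_zero]
  rw [Finset.sum_add_distrib, Tb, Tb]
  ring

lemma Tb_zero_eq (c : ℕ → ℕ) (N : ℕ) :
    Tb c (N+1) 0 = Tb (fun k => c (k+1)) N 0 + c 0 := by
  rw [Tb, Finset.sum_range_succ', Tb]
  simp

lemma Tb_zero_one (c : ℕ → ℕ) (N : ℕ) :
    Tb c N 0 + Tb c N 1 = ∑ k ∈ Finset.range (N+1), (k+1) * c k := by
  rw [Tb, Tb, ← Finset.sum_add_distrib]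
  apply Finset.sum_congr rfl
  intro k _
  simp [Nat.choose_one_right]
  ring

lemma sum_range_add_one (N : ℕ) : ∑ k ∈ Finset.range N, (k+1) = Nat.choose (N+1) 2 := by
  induction N with
  | zero => simp
  | succ N ih =>
      rw [Finset.sum_range_succ, ih, Nat.choose_succ_succ (N+1) 1, Nat.choose_one_right]
      ring

lemma absorb_P3 (γ : ℕ → ℕ) (c0 N : ℕ) (h : ∀ k, k ≤ N → c0 ≤ γ k) :
    (N+1) * γ N + Nat.choose (N+1) 2 * c0 ≤ Tb γ N 0 + Tb γ N 1 := by
  rw [Tb_zero_one, Finset.sum_range_succ, ← sum_range_add_one, Finset.sum_mul]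
  have : ∑ k ∈ Finset.range N, (k+1) * c0 ≤ ∑ k ∈ Finset.range N, (k+1) * γ k := by
    apply Finset.sum_le_sum
    intro k hk
    exact Nat.mul_le_mul_left _ (h k (by simp at hk; omega))
  omega

lemma absorb_P2 (γ : ℕ → ℕ) (N j : ℕ) :
    Nat.choose (j+2) 2 * (Tb γ N (j+1) + Tb γ N (j+2)) ≤ Nat.choose (N+1) 2 * Tb γ N j := by
  rw [Tb, Tb, Tb, ← Finset.sum_add_distrib, Finset.mul_sum, Finset.mul_sum]
  apply Finset.sum_le_sum
  intro k hk
  simp only [Finset.mem_range] at hk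
  have e1 : γ k * Nat.choose k (j+1) + γ k * Nat.choose k (j+2) = γ k * Nat.choose (k+1) (j+2) := by
    rw [Nat.choose_succ_succ' k (j+1), Nat.mul_add]
  rw [e1]
  by_cases hkj : j + 2 ≤ k + 1
  · have h0 := Nat.choose_mul (n := k+1) (k := j+2) (s := 2) (by omega)
    simp only [show (k+1) - 2 = k - 1 from by omega, show (j+2) - 2 = j from by omega] at h0
    have e2 : Nat.choose (j+2) 2 * (γ k * Nat.choose (k+1) (j+2))
        = γ k * (Nat.choose (k+1) 2 * Nat.choose (k-1) j) := by
      rw [← h0]; ring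
    rw [e2]
    have m1 : Nat.choose (k+1) 2 ≤ Nat.choose (N+1) 2 := Nat.choose_le_choose 2 (by omega)
    have m2 : Nat.choose (k-1) j ≤ Nat.choose k j := Nat.choose_le_choose j (by omega)
    calc γ k * (Nat.choose (k+1) 2 * Nat.choose (k-1) j)
        ≤ γ k * (Nat.choose (N+1) 2 * Nat.choose k j) :=
          Nat.mul_le_mul_left _ (Nat.mul_le_mul m1 m2)
      _ = Nat.choose (N+1) 2 * (γ k * Nat.choose k j) := by ring
  · rw [Nat.choose_eq_zero_of_lt (show k+1 < j+2 by omega)]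
    simp

/-- The absorption lemma -/
lemma absorb (γ : ℕ → ℕ) (c0 N j : ℕ) (h : ∀ k, k ≤ N → c0 ≤ γ k) :
    (N+1) * γ N ^2 * Nat.choose N j + c0 * (Tb γ N (j+1) + Tb γ N (j+2))
      ≤ (Tb γ N 0 + Tb γ N 1) * Tb γ N j := by
  have hpos : 0 < Nat.choose (j+2) 2 := Nat.choose_pos (by omega)
  apply Nat.le_of_mul_le_mul_left (_ : Nat.choose (j+2) 2 * _ ≤ Nat.choose (j+2) 2 * _) hpos
  have p2 := absorb_P2 γ N j
  have p3 := absorb_P3 γ c0 N h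
  have p4 : γ N * Nat.choose N j ≤ Tb γ N j := Tb_single_le γ N j
  calc Nat.choose (j+2) 2 * ((N+1) * γ N ^2 * Nat.choose N j + c0 * (Tb γ N (j+1) + Tb γ N (j+2)))
      = Nat.choose (j+2) 2 * ((N+1) * γ N) * (γ N * Nat.choose N j)
        + c0 * (Nat.choose (j+2) 2 * (Tb γ N (j+1) + Tb γ N (j+2))) := by ring
    _ ≤ Nat.choose (j+2) 2 * ((N+1) * γ N) * Tb γ N j
        + c0 * (Nat.choose (N+1) 2 * Tb γ N j) :=
        Nat.add_le_add (Nat.mul_le_mul_left _ p4) (Nat.mul_le_mul_left _ p2)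
    _ ≤ Nat.choose (j+2) 2 * ((N+1) * γ N) * Tb γ N j
        + Nat.choose (j+2) 2 * (c0 * (Nat.choose (N+1) 2 * Tb γ N j)) :=
        Nat.add_le_add_left (Nat.le_mul_of_pos_left _ hpos) _
    _ = Nat.choose (j+2) 2 * (((N+1) * γ N + Nat.choose (N+1) 2 * c0) * Tb γ N j) := by ring
    _ ≤ Nat.choose (j+2) 2 * ((Tb γ N 0 + Tb γ N 1) * Tb γ N j) :=
        Nat.mul_le_mul_left _ (Nat.mul_le_mul_right _ p3)

lemma mono_chain {c : ℕ → ℕ} {M : ℕ} (hc : ∀ k, k < M → c k ≤ c (k+1)) :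
    ∀ a b, a ≤ b → b ≤ M → c a ≤ c b := by
  intro a b
  induction b with
  | zero => intro hab _; rw [Nat.le_zero.mp hab]
  | succ b ih =>
      intro hab hbM
      rcases Nat.eq_or_lt_of_le hab with h | h
      · rw [h]
      · exact le_trans (ih (by omega) (by omega)) (hc b (by omega))

set_option maxHeartbeats 1000000 in
theorem key : ∀ (N : ℕ) (c : ℕ → ℕ), (∀ k, k < N → c k ≤ c (k+1)) → ∀ i j : ℕ, i ≤ j → j ≤ N →
    (c N : ℤ)^2 * (Nat.choose N (i+1) * Nat.choose N j - Nat.choose N i * Nat.choose N (j+1))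
      ≤ (Tb c N (i+1) : ℤ) * Tb c N j - (Tb c N i : ℤ) * Tb c N (j+1) := by
  intro N
  induction N with
  | zero =>
      intro c _ i j hij hj0
      interval_cases j
      interval_cases i
      simp [mul_comm]
  | succ N IH =>
      intro c hc i j hij hjN
      rcases Nat.eq_or_lt_of_le hij with rfl | hilt
      · -- trivial equality case i = j
        have e1 : (Nat.choose (N+1) (i+1) * Nat.choose (N+1) i
            - Nat.choose (N+1) i * Nat.choose (N+1) (i+1) : ℤ) = 0 := by ring
        have e2 : (Tb c (N+1) (i+1) : ℤ) * Tb c (N+1) i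
            - (Tb c (N+1) i : ℤ) * Tb c (N+1) (i+1) = 0 := by ring
        rw [e1, e2, mul_zero]
      · rcases Nat.eq_or_lt_of_le hjN with rfl | hjlt
        · -- j = N+1 : boundary
          rw [Tb_top, Tb_zero_of_gt c (N+1) (N+2) (by omega),
              Nat.choose_self, Nat.choose_eq_zero_of_lt (show N+1 < N+2 by omega)]
          push_cast
          have h1 : (c (N+1) : ℤ) * Nat.choose (N+1) (i+1) ≤ Tb c (N+1) (i+1) := by
            exact_mod_cast Tb_single_le c (N+1) (i+1)
          have h2 : (0:ℤ) ≤ c (N+1) := by positivity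
          nlinarith [h1, h2]
        · -- main case : j ≤ N
          set c' : ℕ → ℕ := fun k => c (k+1) with hc'def
          have hc' : ∀ k, k < N → c' k ≤ c' (k+1) := fun k hk => hc (k+1) (by omega)
          have htop : c' N = c (N+1) := rfl
          obtain ⟨j', rfl⟩ : ∃ j', j = j' + 1 := ⟨j - 1, by omega⟩
          have TS1 : Tb c (N+1) (j'+1) = Tb c' N (j'+1) + Tb c' N j' := Tb_succ c N j'
          have TS2 : Tb c (N+1) (j'+2) = Tb c' N (j'+2) + Tb c' N (j'+1) := Tb_succ c N (j'+1)
          rcases Nat.eq_zero_or_pos i with rfl | hipos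
          · -- i = 0 : absorption case
            have TS0 : Tb c (N+1) 0 = Tb c' N 0 + c 0 := Tb_zero_eq c N
            have TS01 : Tb c (N+1) 1 = Tb c' N 1 + Tb c' N 0 := Tb_succ c N 0
            have ihA := IH c' hc' 0 (j'+1) (by omega) (by omega)
            have habs := absorb c' (c 0) N j'
              (fun k _ => mono_chain hc 0 (k+1) (by omega) (by omega))
            rw [htop] at habs ihA
            have habsZ : ((N:ℤ)+1) * (c (N+1) : ℤ)^2 * Nat.choose N j'
                + (c 0 : ℤ) * ((Tb c' N (j'+1) : ℤ) + (Tb c' N (j'+2) : ℤ))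
                  ≤ ((Tb c' N 0 : ℤ) + Tb c' N 1) * Tb c' N j' := by exact_mod_cast habs
            rw [TS0, TS01, TS1, TS2,
              show Nat.choose (N+1) (0+1) = N + 1 by simp,
              show Nat.choose (N+1) 0 = 1 from Nat.choose_zero_right _,
              show Nat.choose (N+1) (j'+1) = Nat.choose N j' + Nat.choose N (j'+1)
                from Nat.choose_succ_succ' N j',
              show Nat.choose (N+1) (j'+1+1) = Nat.choose N (j'+1) + Nat.choose N (j'+2)
                from Nat.choose_succ_succ' N (j'+1)]
            simp only [Nat.choose_zero_right, Nat.choose_one_right,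
              show (0:ℕ)+1 = 1 from rfl, show j'+1+1 = j'+2 from rfl] at ihA
            push_cast
            push_cast at ihA
            linarith [ihA, habsZ]
          · -- i ≥ 1 : four IH instances
            obtain ⟨i'', rfl⟩ : ∃ i'', i = i'' + 1 := ⟨i - 1, by omega⟩
            have TI1 : Tb c (N+1) (i''+2) = Tb c' N (i''+2) + Tb c' N (i''+1) := Tb_succ c N (i''+1)
            have TI0 : Tb c (N+1) (i''+1) = Tb c' N (i''+1) + Tb c' N i'' := Tb_succ c N i''
            have ih1 := IH c' hc' (i''+1) (j'+1) (by omega) (by omega)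
            have ih2 := IH c' hc' i'' j' (by omega) (by omega)
            have ih3 := IH c' hc' (i''+1) j' (by omega) (by omega)
            have ih4 := IH c' hc' i'' (j'+1) (by omega) (by omega)
            rw [htop] at ih1 ih2 ih3 ih4
            simp only [show i''+1+1 = i''+2 from rfl, show j'+1+1 = j'+2 from rfl]
              at ih1 ih2 ih3 ih4 ⊢
            rw [TI1, TI0, TS1, TS2,
              show Nat.choose (N+1) (i''+2) = Nat.choose N (i''+1) + Nat.choose N (i''+2)
                from Nat.choose_succ_succ' N (i''+1),
              show Nat.choose (N+1) (i''+1) = Nat.choose N i'' + Nat.choose N (i''+1)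
                from Nat.choose_succ_succ' N i'',
              show Nat.choose (N+1) (j'+1) = Nat.choose N j' + Nat.choose N (j'+1)
                from Nat.choose_succ_succ' N j',
              show Nat.choose (N+1) (j'+2) = Nat.choose N (j'+1) + Nat.choose N (j'+2)
                from Nat.choose_succ_succ' N (j'+1)]
            push_cast
            push_cast at ih1 ih2 ih3 ih4
            linarith [ih1, ih2, ih3, ih4]

-- central binomial step
lemma central_step (j : ℕ) :
    (j+1)^2 * Nat.choose (2*j+2) (j+1) = (2*j+2) * ((2*j+1) * Nat.choose (2*j) j) := by
  have h1 := Nat.add_one_mul_choose_eq (2*j+1) j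
  have h2 := Nat.add_one_mul_choose_eq (2*j) j
  have h3 := Nat.choose_symm_half j
  -- h1 : (2j+2) * C(2j+1, j) = C(2j+2, j+1) * (j+1)
  -- h2 : (2j+1) * C(2j, j) = C(2j+1, j+1) * (j+1)
  -- h3 : C(2j+1, j+1) = C(2j+1, j)
  have e1 : Nat.succ (2*j+1) = 2*j+2 := rfl
  have e2 : Nat.succ (2*j) = 2*j+1 := rfl
  have e3 : Nat.succ j = j + 1 := rfl
  rw [show 2*j+1+1 = 2*j+2 from rfl] at h1
  calc (j+1)^2 * Nat.choose (2*j+2) (j+1)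
      = (j+1) * (Nat.choose (2*j+2) (j+1) * (j+1)) := by ring
    _ = (j+1) * ((2*j+2) * Nat.choose (2*j+1) j) := by rw [← h1]
    _ = (2*j+2) * (Nat.choose (2*j+1) (j+1) * (j+1)) := by rw [h3]; ring
    _ = (2*j+2) * ((2*j+1) * Nat.choose (2*j) j) := by rw [← h2]

lemma E_mono (m k : ℕ) (h : k < m) : E m k ≤ E m (k+1) := by
  obtain ⟨j, rfl⟩ : ∃ j, m = k + (j+1) := ⟨m - k - 1, by omega⟩
  set m := k + (j+1)
  have hE1 : E m k = 2^k * Nat.choose (2*j+2) (j+1) * Nat.choose (m+k) k := by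
    rw [E, show 2*m-2*k = 2*j+2 by omega, show m-k = j+1 by omega]
  have hE2 : E m (k+1) = 2^(k+1) * Nat.choose (2*j) j * Nat.choose (m+k+1) (k+1) := by
    rw [E, show 2*m-2*(k+1) = 2*j by omega, show m-(k+1) = j by omega,
      show m+(k+1) = m+k+1 by omega]
  have hA := central_step j
  have hB := Nat.add_one_mul_choose_eq (m+k) k
  -- hB : (m+k+1) * C(m+k, k) = C(m+k+1, k+1) * (k+1)
  have hfac : 0 < (j+1)^2 * (k+1) := by positivity
  apply Nat.le_of_mul_le_mul_left (_ : (j+1)^2 * (k+1) * E m k ≤ (j+1)^2 * (k+1) * E m (k+1)) hfac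
  rw [hE1, hE2]
  have scalar : (k+1) * ((2*j+2) * (2*j+1)) ≤ 2 * ((j+1)^2 * (m+k+1)) := by nlinarith
  calc (j+1)^2 * (k+1) * (2^k * Nat.choose (2*j+2) (j+1) * Nat.choose (m+k) k)
      = 2^k * (k+1) * Nat.choose (m+k) k * ((j+1)^2 * Nat.choose (2*j+2) (j+1)) := by ring
    _ = 2^k * (k+1) * Nat.choose (m+k) k * ((2*j+2) * ((2*j+1) * Nat.choose (2*j) j)) := by
        rw [hA]
    _ = 2^k * Nat.choose (2*j) j * Nat.choose (m+k) k * ((k+1) * ((2*j+2) * (2*j+1))) := by ring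
    _ ≤ 2^k * Nat.choose (2*j) j * Nat.choose (m+k) k * (2 * ((j+1)^2 * (m+k+1))) :=
        Nat.mul_le_mul_left _ scalar
    _ = 2^(k+1) * Nat.choose (2*j) j * (j+1)^2 * ((m+k+1) * Nat.choose (m+k) k) := by ring
    _ = 2^(k+1) * Nat.choose (2*j) j * (j+1)^2 * (Nat.choose (m+k+1) (k+1) * (k+1)) := by rw [hB]
    _ = (j+1)^2 * (k+1) * (2^(k+1) * Nat.choose (2*j) j * Nat.choose (m+k+1) (k+1)) := by ring

lemma E_chain (m : ℕ) : ∀ a b, a ≤ b → b ≤ m → E m a ≤ E m b := by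
  intro a b hab hbm
  induction b with
  | zero => rw [Nat.le_zero.mp hab]
  | succ b ih =>
      rcases Nat.eq_or_lt_of_le hab with h | h
      · rw [h]
      · exact le_trans (ih (by omega) (by omega)) (E_mono m b (by omega))

lemma E_top (m : ℕ) : E m m = 2^m * Nat.choose (2*m) m := by
  rw [E, show 2*m-2*m = 0 by omega, show m-m = 0 by omega, show m+m = 2*m by ring]
  simp

lemma m_le_choose : ∀ m I : ℕ, 1 ≤ I → I < m → m ≤ Nat.choose m I := by
  intro m
  induction m with
  | zero => intro I h1 h2; omega
  | succ m ih =>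
      intro I h1 h2
      obtain ⟨I', rfl⟩ : ∃ I', I = I' + 1 := ⟨I - 1, by omega⟩
      rw [Nat.choose_succ_succ']
      rcases Nat.eq_zero_or_pos I' with rfl | hI'
      · have e1 : Nat.choose m (0+1) = m := by simp
        have e0 : Nat.choose m 0 = 1 := Nat.choose_zero_right m
        omega
      · rcases Nat.eq_or_lt_of_le (show I'+1 ≤ m by omega) with h | h
        · rw [← h]
          have e1 : Nat.choose (I'+1) I' = I'+1 := Nat.choose_succ_self_right I'
          have e2 : Nat.choose (I'+1) (I'+1) = 1 := Nat.choose_self _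
          omega
        · have g1 := ih (I'+1) (by omega) h
          have g2 : 1 ≤ Nat.choose m I' := Nat.choose_pos (by omega)
          omega

lemma IC2 (m i0 : ℕ) (h : i0 + 1 ≤ m) :
    m * (m - i0) ≤ (i0+1) * (Nat.choose m (i0+1))^2 := by
  rcases Nat.eq_or_lt_of_le h with h' | h'
  · subst h'
    simp [Nat.choose_self, show i0+1-i0 = 1 from by omega]
  · have hc : m ≤ Nat.choose m (i0+1) := m_le_choose m (i0+1) (by omega) h'
    calc m * (m - i0) ≤ m * m := Nat.mul_le_mul_left _ (by omega)
      _ ≤ Nat.choose m (i0+1) * Nat.choose m (i0+1) := Nat.mul_le_mul hc hc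
      _ = 1 * (Nat.choose m (i0+1))^2 := by ring
      _ ≤ (i0+1) * (Nat.choose m (i0+1))^2 := Nat.mul_le_mul_right _ (by omega)

/-- The central integer inequality. -/
lemma main_int (m i0 : ℕ) (h : i0 + 1 ≤ m) :
    (m : ℤ) * (m+1) * (E m m : ℤ)^2
      ≤ ((i0:ℤ)+1) * ((i0:ℤ)+2) *
        ((Tb (E m) m (i0+1) : ℤ) * Tb (E m) m (i0+1)
          - (Tb (E m) m i0 : ℤ) * Tb (E m) m (i0+2)) := by
  have hkey := key m (E m) (fun k hk => E_mono m k hk) i0 (i0+1) (by omega) h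
  rw [show i0+1+1 = i0+2 from rfl] at hkey
  set u : ℤ := (Nat.choose m (i0+1) : ℤ) with hu
  set v : ℤ := (Nat.choose m i0 : ℤ) with hv
  set w : ℤ := (Nat.choose m (i0+2) : ℤ) with hw
  set Q : ℤ := (E m m : ℤ)^2 with hQ
  set x : ℤ := (i0 : ℤ) with hx
  set μ : ℤ := (m : ℤ) with hmu
  set S1 : ℤ := (Tb (E m) m (i0+1) : ℤ)
  set S0 : ℤ := (Tb (E m) m i0 : ℤ)
  set S2 : ℤ := (Tb (E m) m (i0+2) : ℤ)
  have hx0 : (0:ℤ) ≤ x := by rw [hx]; exact Int.natCast_nonneg i0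
  -- identities
  have idA : u * (x+1) = v * (μ - x) := by
    have h0 := Nat.choose_succ_right_eq m i0
    have hsub : ((m - i0 : ℕ) : ℤ) = (m:ℤ) - i0 := by omega
    have hcast : (Nat.choose m (i0+1) : ℤ) * ((i0:ℤ)+1)
        = (Nat.choose m i0 : ℤ) * ((m : ℤ) - i0) := by
      rw [← hsub]
      exact_mod_cast h0
    exact hcast
  have idB : w * (x+2) = u * (μ - x - 1) := by
    have h0 := Nat.choose_succ_right_eq m (i0+1)
    have hsub : ((m - (i0+1) : ℕ) : ℤ) = (m:ℤ) - i0 - 1 := by omega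
    have hcast : (Nat.choose m (i0+2) : ℤ) * ((i0:ℤ)+2)
        = (Nat.choose m (i0+1) : ℤ) * ((m : ℤ) - i0 - 1) := by
      rw [← hsub]
      exact_mod_cast h0
    exact hcast
  have hICsq : μ * (μ - x) ≤ (x+1) * u^2 := by
    have := IC2 m i0 h
    have hsub : ((m - i0 : ℕ) : ℤ) = (m:ℤ) - i0 := by omega
    calc μ * (μ - x) = ((m * (m - i0) : ℕ) : ℤ) := by push_cast [hsub]; ring
      _ ≤ (((i0+1) * (Nat.choose m (i0+1))^2 : ℕ) : ℤ) := by exact_mod_cast this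
      _ = (x+1) * u^2 := by push_cast; ring
  have hQ0 : 0 ≤ Q := sq_nonneg _
  have hK : 1 ≤ μ - x := by omega
  -- multiply key by (μ-x)*(x+1)*(x+2) ≥ 0
  have hnn : (0:ℤ) ≤ (μ-x) * ((x+1)*(x+2)) := by
    have h1 : (0:ℤ) ≤ μ - x := by omega
    have h2 : (0:ℤ) ≤ (x+1)*(x+2) := by nlinarith [hx0]
    exact mul_nonneg h1 h2
  have step1 : (μ-x) * ((x+1)*(x+2)) * (Q * (u*u - v*w))
      ≤ (μ-x) * ((x+1)*(x+2)) * (S1*S1 - S0*S2) :=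
    mul_le_mul_of_nonneg_left hkey hnn
  have e1 : (μ-x) * ((x+1)*(x+2)) * (Q * (u*u - v*w)) = Q * ((μ+1) * (x+1) * u^2) := by
    have expand : (μ-x) * ((x+1)*(x+2)) * (u*u - v*w) = (μ+1) * (x+1) * u^2 := by
      linear_combination ((x+1)*(x+2)*w) * idA - ((x+1)^2*u) * idB
    calc (μ-x) * ((x+1)*(x+2)) * (Q * (u*u - v*w))
        = Q * ((μ-x) * ((x+1)*(x+2)) * (u*u - v*w)) := by ring
      _ = Q * ((μ+1) * (x+1) * u^2) := by rw [expand]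
  have step3 : Q * ((μ+1) * (μ * (μ-x))) ≤ Q * ((μ+1) * ((x+1) * u^2)) := by
    apply mul_le_mul_of_nonneg_left _ hQ0
    apply mul_le_mul_of_nonneg_left hICsq (by omega)
  have final : (μ-x) * (μ * (μ+1) * Q) ≤ (μ-x) * (((x+1)*(x+2)) * (S1*S1 - S0*S2)) := by
    calc (μ-x) * (μ * (μ+1) * Q) = Q * ((μ+1) * (μ * (μ-x))) := by ring
      _ ≤ Q * ((μ+1) * ((x+1) * u^2)) := step3
      _ = Q * ((μ+1) * (x+1) * u^2) := by ring
      _ = (μ-x) * ((x+1)*(x+2)) * (Q * (u*u - v*w)) := e1.symm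
      _ ≤ (μ-x) * ((x+1)*(x+2)) * (S1*S1 - S0*S2) := step1
      _ = (μ-x) * (((x+1)*(x+2)) * (S1*S1 - S0*S2)) := by ring
  have hfin := le_of_mul_le_mul_left final (by omega : 0 < μ - x)
  linarith [hfin]

lemma Tb_gt (m n : ℕ) (h : m < n) : Tb (E m) m n = 0 := by
  rw [Tb, Finset.sum_eq_zero]
  intro k hk
  simp only [Finset.mem_range] at hk
  rw [Nat.choose_eq_zero_of_lt (by omega), Nat.mul_zero]

lemma Tb_sum_real (m n : ℕ) :
    ((Tb (E m) m n : ℕ) : ℝ) = ∑ k ∈ Finset.Icc n m,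
        2 ^ k * (Nat.choose (2 * m - 2 * k) (m - k) : ℝ) *
          (Nat.choose (m + k) k : ℝ) * (Nat.choose k n : ℝ) := by
  rw [Tb, Nat.cast_sum]
  rw [← Finset.sum_subset (show Finset.Icc n m ⊆ Finset.range (m+1) by
      intro x hx; simp only [Finset.mem_Icc] at hx; simp only [Finset.mem_range]; omega)
    (by intro x hx hnx
        simp only [Finset.mem_Icc, Finset.mem_range] at hx hnx
        rw [Nat.choose_eq_zero_of_lt (by omega), Nat.mul_zero, Nat.cast_zero])]
  apply Finset.sum_congr rfl
  intro k _
  rw [E]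
  push_cast
  ring

lemma d_eq (m n : ℕ) : d m (n : ℤ) = ((2:ℝ)^(2*m))⁻¹ * (Tb (E m) m n : ℝ) := by
  by_cases h : n ≤ m
  · rw [d, if_pos ⟨Int.natCast_nonneg n, by exact_mod_cast h⟩]
    rw [Int.toNat_natCast, Tb_sum_real]
  · rw [d, if_neg (by
      push_neg
      intro _
      have : (m:ℤ) < (n:ℤ) := by exact_mod_cast (by omega : m < n)
      omega)]
    rw [Tb_gt m n (by omega)]
    simp

theorem boros_moll_minimum (m : ℕ) (hm : 2 ≤ m) :
    (∀ i : ℤ, 1 ≤ i → i ≤ (m : ℤ) →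
      ((m : ℝ) * (m + 1)) * (d m m ^ 2 - d m (m - 1) * d m (m + 1))
        ≤ (i * (i + 1) : ℝ) * (d m i ^ 2 - d m (i - 1) * d m (i + 1))) ∧
    ((m : ℝ) * (m + 1)) * (d m m ^ 2 - d m (m - 1) * d m (m + 1))
      = ((2 : ℝ) ^ (2 * m))⁻¹ * (m * (m + 1)) * (Nat.choose (2 * m) m : ℝ) ^ 2 := by
  set κ : ℝ := ((2:ℝ)^(2*m))⁻¹ with hκ
  have hκpos : 0 < κ := by rw [hκ]; positivity
  have hdm : d m (m : ℤ) = κ * (Tb (E m) m m : ℝ) := d_eq m m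
  have hdm1 : d m ((m : ℤ) + 1) = κ * (Tb (E m) m (m+1) : ℝ) := by
    rw [show ((m:ℤ) + 1) = ((m+1 : ℕ) : ℤ) by push_cast; ring]
    exact d_eq m (m+1)
  have hTm1 : Tb (E m) m (m+1) = 0 := Tb_gt m (m+1) (by omega)
  have hTm : Tb (E m) m m = E m m := Tb_top (E m) m
  have hLHS : ((m : ℝ) * (m + 1)) * (d m m ^ 2 - d m ((m:ℤ) - 1) * d m ((m:ℤ) + 1))
      = ((m : ℝ) * (m + 1)) * κ^2 * ((E m m : ℕ) : ℝ)^2 := by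
    rw [hdm1, hTm1, hdm, hTm]
    push_cast
    ring
  constructor
  · intro i h1 hi
    obtain ⟨i0, hi0⟩ : ∃ i0 : ℕ, i = ((i0 + 1 : ℕ) : ℤ) := ⟨(i-1).toNat, by omega⟩
    have hi0m : i0 + 1 ≤ m := by omega
    subst hi0
    have hd1 : d m ((i0+1 : ℕ) : ℤ) = κ * (Tb (E m) m (i0+1) : ℝ) := d_eq m (i0+1)
    have hd0 : d m (((i0+1 : ℕ) : ℤ) - 1) = κ * (Tb (E m) m i0 : ℝ) := by
      rw [show (((i0+1 : ℕ) : ℤ) - 1) = ((i0 : ℕ) : ℤ) by push_cast; ring]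
      exact d_eq m i0
    have hd2 : d m (((i0+1 : ℕ) : ℤ) + 1) = κ * (Tb (E m) m (i0+2) : ℝ) := by
      rw [show (((i0+1 : ℕ) : ℤ) + 1) = ((i0+2 : ℕ) : ℤ) by push_cast; ring]
      exact d_eq m (i0+2)
    rw [hLHS, hd1, hd0, hd2]
    have hint := main_int m i0 hi0m
    have hreal : ((m : ℝ) * (m + 1)) * ((E m m : ℕ) : ℝ)^2
        ≤ (((i0:ℝ)+1) * ((i0:ℝ)+2)) *
          ((Tb (E m) m (i0+1) : ℝ) * (Tb (E m) m (i0+1) : ℝ)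
            - (Tb (E m) m i0 : ℝ) * (Tb (E m) m (i0+2) : ℝ)) := by
      exact_mod_cast hint
    calc ((m : ℝ) * (m + 1)) * κ^2 * ((E m m : ℕ) : ℝ)^2
        = κ^2 * (((m : ℝ) * (m + 1)) * ((E m m : ℕ) : ℝ)^2) := by ring
      _ ≤ κ^2 * ((((i0:ℝ)+1) * ((i0:ℝ)+2)) *
          ((Tb (E m) m (i0+1) : ℝ) * (Tb (E m) m (i0+1) : ℝ)
            - (Tb (E m) m i0 : ℝ) * (Tb (E m) m (i0+2) : ℝ))) := by
          apply mul_le_mul_of_nonneg_left hreal (by positivity)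
      _ = (((i0+1:ℕ):ℝ) * (((i0+1:ℕ):ℝ) + 1)) *
          ((κ * (Tb (E m) m (i0+1) : ℝ))^2
            - (κ * (Tb (E m) m i0 : ℝ)) * (κ * (Tb (E m) m (i0+2) : ℝ))) := by
          push_cast
          ring
      _ = _ := by push_cast; ring
  · rw [hLHS, E_top]
    have h2 : ((2:ℕ):ℝ) ≠ 0 := by norm_num
    rw [hκ]
    push_cast
    rw [show (2:ℝ)^(2*m) = ((2:ℝ)^m)^2 by rw [← pow_mul]; ring_nf]
    have hne : ((2:ℝ)^m) ≠ 0 := by positivity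
    field_simp
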